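/- arXiv:math/0609539 — 4 statements merged into one kernel-verified Lean document; each statement's English description precedes it below -/
import Mathlib

section
/- Let Γ ⊆ ℝ be a set satisfying the dcc, let N be a natural number, and let S be a set of types such that: (a) S satisfies the acc with respect to the type order; (b) every entry of every type in S belongs to Γ; and (c) for every type β in S there is a type β' in S of length at most N whose multiset of nonzero entries equals the multiset of nonzero entries of β. Then the set of real numbers occurring as an entry of some type in S is finite. (Converse part of Lemma 2.18 of the paper.) -/
/-- The type order on types (finite sequences of reals):
`x ≤ y` iff `y` is shorter than `x`, or they have the same length and
`x` is pointwise `≤ y`. -/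
def TypeLE (x y : List ℝ) : Prop :=
  y.length < x.length ∨ List.Forall₂ (· ≤ ·) x y

/-- Strict version of the type order. -/
def TypeLT (x y : List ℝ) : Prop :=
  TypeLE x y ∧ x ≠ y

/-- A set of types satisfies the acc if there is no infinite strictly
increasing sequence of its elements. -/
def TypesACC (S : Set (List ℝ)) : Prop :=
  ¬ ∃ f : ℕ → List ℝ, (∀ n, f n ∈ S) ∧ ∀ n, TypeLT (f n) (f (n + 1))

/-- A set of reals satisfies the dcc if there is no infinite strictly
decreasing sequence of its elements. -/
def SetDCC (Γ : Set ℝ) : Prop :=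
  ¬ ∃ f : ℕ → ℝ, (∀ n, f n ∈ Γ) ∧ ∀ n, f (n + 1) < f n

/-- A set of reals satisfies the acc if there is no infinite strictly
increasing sequence of its elements. -/
def SetACC (Γ : Set ℝ) : Prop :=
  ¬ ∃ f : ℕ → ℝ, (∀ n, f n ∈ Γ) ∧ ∀ n, f n < f (n + 1)

/-- If `Γ` satisfies the dcc, `S` satisfies the acc, every entry of
every type in `S` lies in `Γ`, and every type in `S` has an abridged version in `S`
of length at most `N` (same multiset of nonzero entries), then the set of reals
occurring as an entry of some type in `S` is finite. -/
theorem finite_entries_of_types_acc (Γ : Set ℝ) (hΓ : SetDCC Γ) (N : ℕ)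
    (S : Set (List ℝ)) (hacc : TypesACC S)
    (hmem : ∀ β ∈ S, ∀ b ∈ β, b ∈ Γ)
    (habr : ∀ β ∈ S, ∃ β' ∈ S, β'.length ≤ N ∧
      Multiset.filter (· ≠ 0) (↑β' : Multiset ℝ) =
        Multiset.filter (· ≠ 0) (↑β : Multiset ℝ)) :
    {b : ℝ | ∃ β ∈ S, b ∈ β}.Finite := by
  classical
  -- Γ is well-founded under <, hence PWO under ≤
  have hWF : Γ.IsWF := by
    rw [Set.isWF_iff_no_descending_seq]
    intro f hf hmemf
    exact hΓ ⟨f, fun n => hmemf n, fun n => hf (Nat.lt_succ_self n)⟩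
  have hPWO : Γ.IsPWO := hWF.isPWO
  by_contra hinf
  have hinf : {b : ℝ | ∃ β ∈ S, b ∈ β}.Infinite := hinf
  -- an injective sequence of entries
  set E := {b : ℝ | ∃ β ∈ S, b ∈ β} with hE
  have hEΓ : E ⊆ Γ := by
    rintro b ⟨β, hβ, hb⟩
    exact hmem β hβ b hb
  let e := hinf.natEmbedding
  have hmemE : ∀ n, (e n : ℝ) ∈ E := fun n => (e n).2
  -- extract a monotone subsequence
  obtain ⟨g, hg⟩ := hPWO.exists_monotone_subseq (f := fun n => (e n : ℝ))
    (fun n => hEΓ (hmemE n))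
  set b : ℕ → ℝ := fun n => (e (g n) : ℝ) with hb
  have hbmono : StrictMono b := by
    intro m n hmn
    rcases lt_or_eq_of_le (hg hmn.le) with h | h
    · exact h
    · exact absurd (g.injective (e.injective (Subtype.ext h))) hmn.ne
  -- shift to avoid the (at most one) zero entry
  set M : ℕ := if h : ∃ k, b k = 0 then h.choose + 1 else 0 with hM
  set c : ℕ → ℝ := fun n => b (n + M) with hc
  have hcE : ∀ n, c n ∈ E := fun n => hmemE (g (n + M))
  have hcmono : StrictMono c := fun m n h => hbmono (by omega)
  have hc0 : ∀ n, c n ≠ 0 := by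
    intro n hn
    have hex : ∃ k, b k = 0 := ⟨n + M, hn⟩
    have hM' : M = hex.choose + 1 := by simp [hM, hex]
    have : n + M = hex.choose := hbmono.injective (hn.trans hex.choose_spec.symm)
    omega
  -- choose types and their abridged versions containing c n
  have hchoice : ∀ n, ∃ β ∈ S, c n ∈ β := fun n => hcE n
  choose β hβS hβmem using hchoice
  choose γ hγS hγlen hγfil using fun n => habr (β n) (hβS n)
  have hcγ : ∀ n, c n ∈ γ n := by
    intro n
    have h1 : c n ∈ Multiset.filter (· ≠ 0) (↑(β n) : Multiset ℝ) :=
      Multiset.mem_filter.mpr ⟨Multiset.mem_coe.mpr (hβmem n), hc0 n⟩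
    have h2 : c n ∈ Multiset.filter (· ≠ 0) (↑(γ n) : Multiset ℝ) := by
      rw [hγfil n]; exact h1
    exact Multiset.mem_coe.mp (Multiset.mem_filter.mp h2).1
  -- positions
  have hpos : ∀ n, ∃ i : Fin (γ n).length, (γ n).get i = c n :=
    fun n => List.mem_iff_get.mp (hcγ n)
  choose idx hidx using hpos
  -- pigeonhole on (length, position)
  have hlenlt : ∀ n, (γ n).length < N + 1 := fun n => Nat.lt_succ_of_le (hγlen n)
  have hidxlt : ∀ n, (idx n : ℕ) < N + 1 := fun n => lt_of_lt_of_le (idx n).2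
    (Nat.le_succ_of_le (hγlen n))
  set F : ℕ → Fin (N + 1) × Fin (N + 1) :=
    fun n => (⟨(γ n).length, hlenlt n⟩, ⟨(idx n : ℕ), hidxlt n⟩) with hF
  obtain ⟨y, hy⟩ := Finite.exists_infinite_fiber F
  have hyinf : {n | F n = y}.Infinite := by
    rw [Set.infinite_coe_iff] at hy
    convert hy using 1
    rfl
  set φ : ℕ → ℕ := Nat.nth (fun n => F n = y) with hφ
  have hφmono : StrictMono φ := Nat.nth_strictMono hyinf
  have hφy : ∀ n, F (φ n) = y := fun n => Nat.nth_mem_of_infinite hyinf n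
  have hlenconst : ∀ m n, (γ (φ m)).length = (γ (φ n)).length := by
    intro m n
    have h1 := congrArg (fun z : Fin (N+1) × Fin (N+1) => (z.1 : ℕ)) (hφy m)
    have h2 := congrArg (fun z : Fin (N+1) × Fin (N+1) => (z.1 : ℕ)) (hφy n)
    simp [hF] at h1 h2
    omega
  have hidxconst : ∀ m n, (idx (φ m) : ℕ) = (idx (φ n) : ℕ) := by
    intro m n
    have h1 := congrArg (fun z : Fin (N+1) × Fin (N+1) => (z.2 : ℕ)) (hφy m)
    have h2 := congrArg (fun z : Fin (N+1) × Fin (N+1) => (z.2 : ℕ)) (hφy n)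
    simp [hF] at h1 h2
    omega
  -- Higman's lemma
  have hH := Set.PartiallyWellOrderedOn.partiallyWellOrderedOn_sublistForall₂
    (· ≤ · : ℝ → ℝ → Prop) hPWO
  haveI : IsPreorder (List ℝ) (List.SublistForall₂ (· ≤ · : ℝ → ℝ → Prop)) :=
    @IsPreorder.mk _ _ inferInstance inferInstance
  obtain ⟨ψ, hψ⟩ := hH.exists_monotone_subseq (f := fun n => γ (φ n))
    (fun n x hx => hmem _ (hγS (φ n)) x hx)
  -- the contradiction sequence
  refine hacc ⟨fun n => γ (φ (ψ n)), fun n => hγS _, fun n => ?_⟩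
  have hsub := hψ n (n + 1) (Nat.le_succ n)
  obtain ⟨l, hfor, hsl⟩ := List.sublistForall₂_iff.mp hsub
  have hlen1 : (γ (φ (ψ n))).length = (γ (φ (ψ (n + 1)))).length :=
    hlenconst (ψ n) (ψ (n + 1))
  have hleq : l = γ (φ (ψ (n + 1))) := by
    apply hsl.eq_of_length
    rw [← hfor.length_eq, ← hlen1]
  subst hleq
  have hforall : List.Forall₂ (· ≤ ·) (γ (φ (ψ n))) (γ (φ (ψ (n + 1)))) := hfor
  constructor
  · exact Or.inr hforall
  · -- the entry at the common position strictly increases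
    intro heq
    have hlt : c (φ (ψ n)) < c (φ (ψ (n + 1))) :=
      hcmono (hφmono (ψ.strictMono (Nat.lt_succ_self n)))
    apply hlt.ne
    have hpeq : (idx (φ (ψ n)) : ℕ) = (idx (φ (ψ (n + 1))) : ℕ) :=
      hidxconst (ψ n) (ψ (n + 1))
    have h1 : ((idx (φ (ψ n)) : ℕ)) < (γ (φ (ψ n))).length := (idx (φ (ψ n))).2
    have h2 : ((idx (φ (ψ (n+1)))) : ℕ) < (γ (φ (ψ (n+1)))).length := (idx (φ (ψ (n+1)))).2
    have e1 : (γ (φ (ψ n)))[(idx (φ (ψ n)) : ℕ)]? = some (c (φ (ψ n))) := by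
      rw [List.getElem?_eq_getElem h1]
      exact congrArg some (hidx (φ (ψ n)))
    have e4 : (γ (φ (ψ (n+1))))[(idx (φ (ψ (n+1))) : ℕ)]? = some (c (φ (ψ (n+1)))) := by
      rw [List.getElem?_eq_getElem h2]
      exact congrArg some (hidx (φ (ψ (n+1))))
    have e2 := congrArg (fun l : List ℝ => l[(idx (φ (ψ n)) : ℕ)]?) heq
    simp only at e2
    have e3 : (γ (φ (ψ (n+1))))[(idx (φ (ψ n)) : ℕ)]? =
        (γ (φ (ψ (n+1))))[(idx (φ (ψ (n+1))) : ℕ)]? := by rw [hpeq]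
    have : some (c (φ (ψ n))) = some (c (φ (ψ (n+1)))) :=
      e1.symm.trans (e2.trans (e3.trans e4))
    exact Option.some.inj this
end

section
/- Let Γ ⊆ [0,1] be a set satisfying the dcc. Then the set of real numbers b' with b' < 1 that can be written as b' = (m−1)/m + (1/m)·(c_1 b_1 + ⋯ + c_k b_k) for some positive integer m, some k ≥ 0, some nonnegative integers c_1, …, c_k, and some elements b_1, …, b_k ∈ Γ, satisfies the dcc. (First part of Lemma 2.16 of the paper, on multiplicities arising from adjunction.) -/
/-- If `Γ ⊆ [0,1]` satisfies the dcc, then the set of real numbers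
`b' < 1` of the form `b' = (m-1)/m + (1/m) * Σ cᵢ bᵢ` with `m` a positive integer,
`cᵢ` nonnegative integers and `bᵢ ∈ Γ`, satisfies the dcc. -/
theorem adjunction_multiplicities_dcc (Γ : Set ℝ) (hsub : Γ ⊆ Set.Icc 0 1)
    (hΓ : SetDCC Γ) :
    SetDCC {b' : ℝ | b' < 1 ∧ ∃ (m : ℕ) (k : ℕ) (c : Fin k → ℕ) (b : Fin k → ℝ),
      0 < m ∧ (∀ i, b i ∈ Γ) ∧
      b' = ((m : ℝ) - 1) / m + (1 / m) * ∑ i, (c i : ℝ) * b i} := by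
  classical
  -- `Γ` is well-founded
  have hΓwf : Γ.IsWF := by
    rw [Set.isWF_iff_no_descending_seq]
    intro f hf hmemf
    exact hΓ ⟨f, fun n => hmemf n, fun n => hf (Nat.lt_succ_self n)⟩
  -- the additive closure of `Γ` is well-founded
  set T : Set ℝ := (AddSubmonoid.closure Γ : Set ℝ) with hTdef
  have hTpwo : T.IsPWO :=
    Set.IsPWO.addSubmonoid_closure (fun x hx => (hsub hx).1) hΓwf.isPWO
  have hTdcc : SetDCC T := by
    rintro ⟨f, hmemf, hdec⟩
    exact (Set.isWF_iff_no_descending_seq.1 hTpwo.isWF) f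
      (strictAnti_nat_of_succ_lt hdec) hmemf
  rintro ⟨f, hmem, hdec⟩
  have hfanti : StrictAnti f := strictAnti_nat_of_succ_lt hdec
  have hf0 : f 0 < 1 := (hmem 0).1
  -- extract the data
  have H : ∀ n, ∃ m : ℕ, 0 < m ∧ ∃ s : ℝ, s ∈ T ∧ 0 ≤ s ∧
      f n = ((m : ℝ) - 1) / m + (1 / m) * s := by
    intro n
    obtain ⟨-, m, k, c, b, hm, hb, heq⟩ := hmem n
    refine ⟨m, hm, ∑ i, (c i : ℝ) * b i, ?_, ?_, heq⟩
    · apply AddSubmonoid.sum_mem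
      intro i _
      have h1 : (c i : ℝ) * b i = c i • b i := by simp [nsmul_eq_mul]
      rw [h1]
      exact AddSubmonoid.nsmul_mem _ (AddSubmonoid.subset_closure (hb i)) _
    · exact Finset.sum_nonneg fun i _ => mul_nonneg (Nat.cast_nonneg _) (hsub (hb i)).1
  choose m hm s hsT hs0 heq using H
  have hmne : ∀ n, ((m n : ℝ)) ≠ 0 := fun n => Nat.cast_ne_zero.mpr (hm n).ne'
  have hmpos : ∀ n, (0 : ℝ) < m n := fun n => Nat.cast_pos.mpr (hm n)
  -- `s` in terms of `f`
  have key : ∀ n, s n = (m n : ℝ) * f n - ((m n : ℝ) - 1) := by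
    intro n
    have h := heq n
    field_simp at h
    rw [eq_div_iff (hmne n)] at h
    linarith
  -- bound on `m`
  have hbound : ∀ n, (m n : ℝ) ≤ 1 / (1 - f 0) := by
    intro n
    have hle : ((m n : ℝ) - 1) / m n ≤ f 0 := by
      have h1 : ((m n : ℝ) - 1) / m n ≤ f n := by
        rw [heq n]
        have := mul_nonneg (one_div_nonneg.mpr (hmpos n).le) (hs0 n)
        linarith
      exact h1.trans (hfanti.antitone (Nat.zero_le n))
    have h2 : (m n : ℝ) - 1 ≤ f 0 * (m n) :=
      (div_le_iff₀ (hmpos n)).1 hle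
    rw [le_div_iff₀ (by linarith : (0:ℝ) < 1 - f 0)]
    nlinarith
  set M : ℕ := Nat.ceil (1 / (1 - f 0)) with hMdef
  have hmM : ∀ n, m n < M + 1 := by
    intro n
    have : (m n : ℝ) ≤ (M : ℝ) := (hbound n).trans (Nat.le_ceil _)
    exact Nat.lt_succ_of_le (Nat.cast_le.mp this)
  -- pigeonhole: some value of `m` occurs infinitely often
  set F : ℕ → Fin (M + 1) := fun n => ⟨m n, hmM n⟩ with hFdef
  obtain ⟨y, hy⟩ := Finite.exists_infinite_fiber F
  haveI : Infinite ↥(F ⁻¹' {y}) := hy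
  set e := Nat.orderEmbeddingOfSet (F ⁻¹' {y}) with hedef
  have hemem : ∀ n, e n ∈ F ⁻¹' {y} := by
    intro n
    have h1 := Nat.orderEmbeddingOfSet_range (F ⁻¹' {y})
    rw [← h1]
    exact Set.mem_range_self n
  have hmeq : ∀ n, (m (e n) : ℝ) = ((y : ℕ) : ℝ) := by
    intro n
    have h1 : F (e n) = y := hemem n
    have h2 : m (e n) = (y : ℕ) := congrArg Fin.val h1
    rw [h2]
  -- the strictly decreasing sequence in `T`
  refine hTdcc ⟨fun n => s (e n), fun n => hsT _, fun n => ?_⟩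
  have hfe : f (e (n + 1)) < f (e n) := hfanti (e.strictMono (Nat.lt_succ_self n))
  have hypos : (0 : ℝ) < ((y : ℕ) : ℝ) := by
    have := hmpos (e n); rwa [hmeq n] at this
  show s (e (n + 1)) < s (e n)
  rw [key (e n), key (e (n + 1)), hmeq n, hmeq (n + 1)]
  nlinarith
end

section
/- Let Γ ⊆ (0,1] be a set satisfying the dcc. Then there exists a finite subset Γ_f ⊆ Γ such that every finite multiset of elements of Γ whose sum equals 2 consists entirely of elements of Γ_f. (The combinatorial content of the dimension-one case of the Weak Finiteness Proposition 4.1 of the paper: for a boundary B = Σ b_j P_j on ℙ¹ with K+B ≡ 0 one has Σ b_j = 2.) -/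
open Pointwise


/-- Iterated sumset of `insert 0 Γ`. -/
def sumsetB (Γ : Set ℝ) : ℕ → Set ℝ
  | 0 => {0}
  | n + 1 => (insert 0 Γ) + sumsetB Γ n

lemma sumsetB_isPWO (Γ : Set ℝ) (h : Γ.IsPWO) : ∀ n, (sumsetB Γ n).IsPWO := by
  intro n
  induction n with
  | zero => exact (Set.finite_singleton 0).isPWO
  | succ n ih => exact Set.IsPWO.add (h.insert 0) ih

lemma zero_mem_sumsetB (Γ : Set ℝ) : ∀ n, (0 : ℝ) ∈ sumsetB Γ n := by
  intro n
  induction n with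
  | zero => rfl
  | succ n ih =>
    have : (0 : ℝ) = 0 + 0 := by ring
    rw [this]
    exact Set.add_mem_add (Set.mem_insert 0 Γ) ih

lemma sum_mem_sumsetB (Γ : Set ℝ) : ∀ n (N : Multiset ℝ), (∀ x ∈ N, x ∈ Γ) →
    Multiset.card N ≤ n → N.sum ∈ sumsetB Γ n := by
  intro n
  induction n with
  | zero =>
    intro N _ hcard
    have : N = 0 := Multiset.card_eq_zero.mp (Nat.le_zero.mp hcard)
    simp [this, sumsetB]
  | succ n ih =>
    intro N hN hcard
    rcases Multiset.empty_or_exists_mem N with h0 | ⟨a, ha⟩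
    · have : N.sum = (0 : ℝ) := by simp [h0]
      rw [this]
      exact zero_mem_sumsetB Γ (n + 1)
    · have hNa : a ::ₘ N.erase a = N := Multiset.cons_erase ha
      have hsum : N.sum = a + (N.erase a).sum := by
        rw [← hNa]; simp
      rw [hsum]
      refine Set.add_mem_add (Set.mem_insert_of_mem _ (hN a ha)) (ih _ ?_ ?_)
      · intro x hx; exact hN x (Multiset.mem_of_mem_erase hx)
      · have h1 : Multiset.card (N.erase a) = Multiset.card N - 1 :=
          Multiset.card_erase_of_mem ha
        omega

/-- If `Γ ⊆ (0,1]` satisfies the dcc, then there is a finite subset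
`Γ_f ⊆ Γ` such that every finite multiset of elements of `Γ` summing to `2`
consists entirely of elements of `Γ_f`. -/
theorem weak_finiteness_dim_one (Γ : Set ℝ) (hsub : Γ ⊆ Set.Ioc 0 1)
    (hΓ : SetDCC Γ) :
    ∃ Γf : Set ℝ, Γf ⊆ Γ ∧ Γf.Finite ∧
      ∀ M : Multiset ℝ, (∀ b ∈ M, b ∈ Γ) → M.sum = 2 → ∀ b ∈ M, b ∈ Γf := by
  classical
  have hwf : Γ.IsWF := by
    rw [Set.isWF_iff_no_descending_seq]
    intro f hf hmem
    exact hΓ ⟨f, fun n => hmem n, fun n => hf (Nat.lt_succ_self n)⟩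
  have hpwo : Γ.IsPWO := Set.isPWO_iff_isWF.mpr hwf
  by_cases hne : Γ.Nonempty
  swap
  · refine ⟨∅, Set.empty_subset _, Set.finite_empty, ?_⟩
    intro M hM _ b hb
    exact absurd ⟨b, hM b hb⟩ hne
  set m := hwf.min hne with hm_def
  have hm_mem : m ∈ Γ := hwf.min_mem hne
  have hm_pos : 0 < m := (hsub hm_mem).1
  have hm_le : ∀ b ∈ Γ, m ≤ b := fun b hb => hwf.min_le hne hb
  obtain ⟨K, hK⟩ := exists_nat_gt (2 / m)
  -- the candidate finite set
  set S : Set ℝ := {b | b ∈ Γ ∧ ∃ M : Multiset ℝ,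
      (∀ x ∈ M, x ∈ Γ) ∧ M.sum = 2 ∧ b ∈ M} with hS_def
  -- bound the cardinality of a multiset summing to 2
  have hcard_le : ∀ M : Multiset ℝ, (∀ x ∈ M, x ∈ Γ) → M.sum = 2 →
      Multiset.card M ≤ K := by
    intro M hM hsum
    by_contra hcon
    push_neg at hcon
    have h1 : Multiset.card M • m ≤ M.sum :=
      Multiset.card_nsmul_le_sum (fun x hx => hm_le x (hM x hx))
    rw [hsum, nsmul_eq_mul] at h1
    have h2 : (2 : ℝ) / m < (K : ℝ) := hK
    have h3 : (K : ℝ) < Multiset.card M := by exact_mod_cast hcon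
    have : (2 : ℝ) < (Multiset.card M : ℝ) * m := by
      calc (2 : ℝ) = (2 / m) * m := by field_simp
        _ < (K : ℝ) * m := by exact mul_lt_mul_of_pos_right h2 hm_pos
        _ < (Multiset.card M : ℝ) * m := mul_lt_mul_of_pos_right h3 hm_pos
    linarith
  -- key: for b ∈ S, 2 - b lies in the K-fold sumset
  have hkey : ∀ b ∈ S, (2 : ℝ) - b ∈ sumsetB Γ K := by
    rintro b ⟨hbΓ, M, hM, hsum, hbM⟩
    have herase : (M.erase b).sum = 2 - b := by
      have : b + (M.erase b).sum = M.sum := by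
        conv_rhs => rw [← Multiset.cons_erase hbM]
        simp
      rw [hsum] at this
      linarith
    rw [← herase]
    refine sum_mem_sumsetB Γ K (M.erase b) ?_ ?_
    · intro x hx; exact hM x (Multiset.mem_of_mem_erase hx)
    · have h1 : Multiset.card (M.erase b) ≤ Multiset.card M := Multiset.card_erase_le
      have h2 := hcard_le M hM hsum
      omega
  -- S is finite
  have hSfin : S.Finite := by
    by_contra hinf
    have hinf' : S.Infinite := hinf
    set f : ℕ ↪ S := hinf'.natEmbedding S with hf_def
    have hfΓ : ∀ n, ((f n : ℝ)) ∈ Γ := fun n => (f n).2.1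
    obtain ⟨g, hg⟩ := hpwo.exists_monotone_subseq (f := fun n => (f n : ℝ)) hfΓ
    have hinj : Function.Injective (fun n => ((f (g n) : ℝ))) := by
      intro a b hab
      exact g.injective (f.injective (Subtype.ext hab))
    have hsm : StrictMono (fun n => ((f (g n) : ℝ))) := hg.strictMono_of_injective hinj
    have hanti : StrictAnti (fun n => (2 : ℝ) - (f (g n) : ℝ)) := by
      intro a b hab
      have := hsm hab
      simpa using this
    have hBwf : (sumsetB Γ K).IsWF := (sumsetB_isPWO Γ hpwo K).isWF
    rw [Set.isWF_iff_no_descending_seq] at hBwf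
    exact hBwf _ hanti (fun n => hkey _ (f (g n)).2)
  refine ⟨S, fun b hb => hb.1, hSfin, ?_⟩
  intro M hM hsum b hb
  exact ⟨hM b hb, M, hM, hsum, hb⟩
end

section
/- Let R ⊆ (0,∞) be a finite set. Then the set of types (b_1, …, b_n) with every entry b_i > 0 for which there exist positive integers m_1, …, m_n with m_1 b_1 + ⋯ + m_n b_n ∈ R satisfies the acc with respect to the type order. (The boundedness argument of Example 2.15(1) of the paper: on a bounded family of Fano varieties the intersection numbers m_i = (D_i·C) are positive integers and Σ b_i m_i = (−K·C) takes finitely many values.) -/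
/-- If `R ⊆ (0,∞)` is finite, then the set of types with positive
entries `bᵢ` for which there exist positive integers `mᵢ` with `Σ mᵢ bᵢ ∈ R`
satisfies the acc with respect to the type order. -/
theorem types_acc_of_integer_combination (R : Set ℝ) (hR : R.Finite)
    (hsub : ∀ r ∈ R, 0 < r) :
    TypesACC {β : List ℝ | (∀ b ∈ β, 0 < b) ∧
      ∃ ms : List ℕ, ms.length = β.length ∧ (∀ m ∈ ms, 0 < m) ∧
        (List.zipWith (fun b m => (m : ℝ) * b) β ms).sum ∈ R} := by
  rintro ⟨f, hfS, hstep'⟩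
  have hstep : ∀ n, (((f (n+1)).length < (f n).length) ∨
      List.Forall₂ (· ≤ ·) (f n) (f (n+1))) ∧ f n ≠ f (n+1) := hstep'
  -- lengths nonincreasing
  have hlen1 : ∀ n, (f (n+1)).length ≤ (f n).length := by
    intro n
    rcases (hstep n).1 with h | h
    · exact h.le
    · exact h.length_eq.ge
  have hanti : ∀ a b, a ≤ b → (f b).length ≤ (f a).length := by
    intro a b hab
    induction hab with
    | refl => exact le_rfl
    | step hb ih => exact (hlen1 _).trans ih
  -- minimal length index
  obtain ⟨N, hN⟩ : ∃ N, ∀ n, (f N).length ≤ (f n).length := by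
    obtain ⟨N, hN⟩ := Set.mem_range.mp (Nat.sInf_mem (Set.range_nonempty
      (fun n => (f n).length)))
    exact ⟨N, fun n => hN ▸ Nat.sInf_le ⟨n, rfl⟩⟩
  set g : ℕ → List ℝ := fun n => f (N + n) with hg
  set k : ℕ := (f N).length with hkdef
  have hk : ∀ n, (g n).length = k :=
    fun n => le_antisymm (hanti N (N + n) (Nat.le_add_right _ _)) (hN _)
  have h2 : ∀ n, List.Forall₂ (· ≤ ·) (g n) (g (n+1)) := by
    intro n
    rcases (hstep (N + n)).1 with h | h
    · exfalso
      have := hanti N (N+n) (Nat.le_add_right _ _)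
      have h2 := hN (N + n + 1)
      omega
    · simpa [hg, Nat.add_assoc] using h
  have hne : ∀ n, g n ≠ g (n+1) := by
    intro n
    simpa [hg, Nat.add_assoc] using (hstep (N + n)).2
  -- k positive
  have hkpos : 0 < k := by
    rcases Nat.eq_zero_or_pos k with h | h
    · have h0 : g 0 = [] := List.length_eq_zero_iff.mp (by rw [hk 0, h])
      have h1 : g 1 = [] := List.length_eq_zero_iff.mp (by rw [hk 1, h])
      exact absurd (h0.trans h1.symm) (hne 0)
    · exact h
  haveI : NeZero k := ⟨hkpos.ne'⟩
  -- coordinates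
  set B : ℕ → Fin k → ℝ := fun n i => (g n).get (Fin.cast (hk n).symm i) with hB
  have hBmono1 : ∀ n i, B n i ≤ B (n+1) i := by
    intro n i
    exact (h2 n).get _ _
  have hBmono : ∀ a b, a ≤ b → ∀ i, B a i ≤ B b i := by
    intro a b hab i
    induction hab with
    | refl => exact le_rfl
    | step hb ih => exact ih.trans (hBmono1 _ i)
  have hBstrict : ∀ n, ∃ i, B n i < B (n+1) i := by
    intro n
    by_contra hcon
    push_neg at hcon
    apply hne n
    apply List.ext_get (by rw [hk n, hk (n+1)])
    intro i h1 h1'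
    have hik : i < k := by rwa [hk n] at h1
    exact le_antisymm ((h2 n).get h1 h1')
      (le_of_not_gt (by simpa [hB] using hcon ⟨i, hik⟩))
  have hBpos : ∀ n i, 0 < B n i := by
    intro n i
    exact (hfS (N + n)).1 _ (List.get_mem _ _)
  -- ms data
  have hex : ∀ n, ∃ ms : List ℕ, ms.length = (g n).length ∧ (∀ m ∈ ms, 0 < m) ∧
      (List.zipWith (fun b m => (m : ℝ) * b) (g n) ms).sum ∈ R := fun n => (hfS (N + n)).2
  choose ms hmslen hmspos hmsR using hex
  set M : ℕ → Fin k → ℕ := fun n i => (ms n).get (Fin.cast (((hmslen n).trans (hk n)).symm) i) with hM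
  have hMpos : ∀ n i, 0 < M n i := fun n i => hmspos n _ (List.get_mem _ _)
  set r : ℕ → ℝ := fun n =>
    (List.zipWith (fun (b m : ℝ) => m * b) (g n) ((ms n).map (fun a : ℕ => (a : ℝ)))).sum with hr
  have hrR : ∀ n, r n ∈ R := by
    intro n
    have := hmsR n
    simpa [hr, ← List.map_eq_flatMap] using this
  have hrsum : ∀ n, r n = ∑ i : Fin k, (M n i : ℝ) * B n i := by
    intro n
    have hl : (List.zipWith (fun (b m : ℝ) => m * b) (g n) ((ms n).map (fun a : ℕ => (a : ℝ)))).length = k := by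
      simp [List.length_zipWith, hk n, hmslen n]
    simp only [hr]
    conv_lhs => rw [← List.ofFn_get (List.zipWith (fun (b m : ℝ) => m * b) (g n) ((ms n).map (fun a : ℕ => (a : ℝ))))]
    rw [List.sum_ofFn]
    rw [← Fin.sum_congr' _ hl]
    apply Finset.sum_congr rfl
    intro i _
    simp [List.getElem_zipWith, List.getElem_map, hB, hM]
  -- bounds
  obtain ⟨c, hc⟩ := hR.bddAbove
  set ε : ℝ := Finset.univ.inf' (Finset.univ_nonempty) (B 0) with hε
  have hεpos : 0 < ε := by
    rw [hε, Finset.lt_inf'_iff]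
    intro i _
    exact hBpos 0 i
  have hεle : ∀ n i, ε ≤ B n i := by
    intro n i
    exact (Finset.inf'_le _ (Finset.mem_univ i)).trans (hBmono 0 n (Nat.zero_le n) i)
  have hMbound : ∀ n i, (M n i : ℝ) * ε ≤ c := by
    intro n i
    calc (M n i : ℝ) * ε ≤ (M n i : ℝ) * B n i :=
          mul_le_mul_of_nonneg_left (hεle n i) (Nat.cast_nonneg _)
      _ ≤ ∑ j : Fin k, (M n j : ℝ) * B n j := by
          apply Finset.single_le_sum (f := fun j => (M n j : ℝ) * B n j)
            (fun j _ => mul_nonneg (Nat.cast_nonneg _) (hBpos n j).le) (Finset.mem_univ i)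
      _ = r n := (hrsum n).symm
      _ ≤ c := hc (hrR n)
  have hMK : ∀ n i, M n i ≤ Nat.floor (c / ε) := by
    intro n i
    apply Nat.le_floor
    rw [le_div_iff₀ hεpos]
    exact hMbound n i
  -- pigeonhole
  set K := Nat.floor (c / ε) with hK
  haveI := hR.to_subtype
  set Φ : ℕ → (Fin k → Fin (K+1)) × R := fun n =>
    (fun i => ⟨M n i, Nat.lt_succ_of_le (hMK n i)⟩, ⟨r n, hrR n⟩) with hΦ
  obtain ⟨a, b, hab, heq⟩ := Finite.exists_ne_map_eq_of_infinite Φ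
  wlog hlt : a < b generalizing a b
  · exact this b a hab.symm heq.symm (by omega)
  have hMeq : ∀ i, M a i = M b i := by
    intro i
    have := congrArg (fun p => ((p.1 i : Fin (K+1)) : ℕ)) heq
    simpa [hΦ] using this
  have hreq : r a = r b := by
    have := congrArg (fun p => (p.2 : ℝ)) heq
    simpa [hΦ] using this
  -- strict inequality
  obtain ⟨i₀, hi₀⟩ := hBstrict a
  have hstrict : r a < r b := by
    rw [hrsum, hrsum]
    apply Finset.sum_lt_sum
    · intro i _
      rw [hMeq i]
      exact mul_le_mul_of_nonneg_left (hBmono a b hlt.le i) (Nat.cast_nonneg _)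
    · refine ⟨i₀, Finset.mem_univ _, ?_⟩
      rw [hMeq i₀]
      apply mul_lt_mul_of_pos_left _ (by exact_mod_cast hMpos b i₀)
      exact lt_of_lt_of_le hi₀ (hBmono (a+1) b hlt i₀)
  exact absurd hreq hstrict.ne
end
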